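/- Let G be a group with a left-invariant metric d ≤ 1 satisfying the uniform continuity condition for multiplication (for every ε > 0 there is δ > 0 such that d(x₁,x₂) < δ implies d(y·x₁·z, y·x₂·z) < ε for all y,z). Then the bi-invariant metric d*(x,y) := sup_{u,v} d(u·x·v, u·y·v) is uniformly equivalent to d: every open d-ball contains an open d*-ball around the same center and vice versa; in particular d and d* induce the same topology on G. -/
import Mathlib


/-- Under the hypotheses of Lemma 1, the bi-invariant metric
`d* x y = sup_{u,v} d (u*x*v) (u*y*v)` is uniformly equivalent to `d`:
every open `d`-ball contains an open `d*`-ball around the same center and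
vice versa. -/
theorem dstar_uniformly_equivalent {G : Type*} [Group G] (d : G → G → ℝ)
    (hd_self : ∀ x, d x x = 0)
    (hd_eq : ∀ x y, d x y = 0 → x = y)
    (hd_symm : ∀ x y, d x y = d y x)
    (hd_tri : ∀ x y z, d x z ≤ d x y + d y z)
    (hd_le_one : ∀ x y, d x y ≤ 1)
    (hd_left : ∀ g x y, d (g * x) (g * y) = d x y)
    (huc : ∀ ε > (0 : ℝ), ∃ δ > (0 : ℝ), ∀ x₁ x₂ y z : G,
      d x₁ x₂ < δ → d (y * x₁ * z) (y * x₂ * z) < ε)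
    (dstar : G → G → ℝ)
    (hdstar : ∀ x y, dstar x y = sSup {r : ℝ | ∃ u v : G, r = d (u * x * v) (u * y * v)}) :
    (∀ ε > (0 : ℝ), ∃ δ > (0 : ℝ), ∀ x y, d x y < δ → dstar x y < ε) ∧
    (∀ ε > (0 : ℝ), ∃ δ > (0 : ℝ), ∀ x y, dstar x y < δ → d x y < ε) := by
  have hle : ∀ x y : G, d x y ≤ dstar x y := by
    intro x y
    rw [hdstar]
    apply le_csSup
    · exact ⟨1, fun r ⟨u, v, hr⟩ => hr ▸ hd_le_one _ _⟩
    · exact ⟨1, 1, by simp⟩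
  constructor
  · intro ε hε
    obtain ⟨δ, hδ, h⟩ := huc (ε / 2) (by linarith)
    refine ⟨δ, hδ, fun x y hxy => ?_⟩
    rw [hdstar]
    have : sSup {r : ℝ | ∃ u v : G, r = d (u * x * v) (u * y * v)} ≤ ε / 2 := by
      apply csSup_le
      · exact ⟨d x y, 1, 1, by simp⟩
      · rintro r ⟨u, v, rfl⟩
        exact le_of_lt (h x y u v hxy)
    linarith
  · intro ε hε
    exact ⟨ε, hε, fun x y h => lt_of_le_of_lt (hle x y) h⟩
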